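/- Let f : ℝ^d → ℝ be M-strongly convex with ρ-Lipschitz Hessian, minimized at x*. For any x_B, let x̃ = x_B − (∇²f(x_B))^{−1}∇f(x_B) and f̃(x) = ½(x − x̃)ᵀ∇²f(x_B)(x − x̃). Then f̃(x_B) ≤ max{ 2(f(x_B) − f(x*)), (8ρ/(3M^{3/2}))·(f(x_B) − f(x*))^{3/2} }. -/

import Mathlib

open scoped RealInnerProductSpace

/-- Frobenius norm of a continuous linear operator on `EuclideanSpace ℝ (Fin d)`,
computed in the standard orthonormal basis. -/
noncomputable def frobNorm {d : ℕ}
    (A : EuclideanSpace ℝ (Fin d) →L[ℝ] EuclideanSpace ℝ (Fin d)) : ℝ :=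
  Real.sqrt (∑ i, ∑ j, (A (EuclideanSpace.single j 1) i) ^ 2)

lemma sum_apply_eucl {d : ℕ} (v : Fin d → EuclideanSpace ℝ (Fin d)) (i : Fin d) :
    (∑ j, v j) i = ∑ j, v j i := by
  induction (Finset.univ : Finset (Fin d)) using Finset.cons_induction with
  | empty => rfl
  | cons a s ha ih => rw [Finset.sum_cons, Finset.sum_cons, ← ih]; rfl

lemma frob_op_bound {d : ℕ} (A : EuclideanSpace ℝ (Fin d) →L[ℝ] EuclideanSpace ℝ (Fin d))
    (w : EuclideanSpace ℝ (Fin d)) : ‖A w‖ ≤ frobNorm A * ‖w‖ := by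
  have hdec : w = ∑ j, w j • EuclideanSpace.single j 1 := by
    ext i
    rw [sum_apply_eucl]
    simp [EuclideanSpace.single_apply]
  have hAw : ∀ i, A w i = ∑ j, (A (EuclideanSpace.single j 1) i) * w j := by
    intro i
    conv_lhs => rw [hdec, map_sum]
    rw [sum_apply_eucl]
    simp [mul_comm]
  have h1 : ‖A w‖ ^ 2 ≤ (∑ i, ∑ j, (A (EuclideanSpace.single j 1) i) ^ 2) * ‖w‖ ^ 2 := by
    rw [EuclideanSpace.norm_eq, Real.sq_sqrt (by positivity), EuclideanSpace.norm_eq,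
      Real.sq_sqrt (by positivity)]
    rw [Finset.sum_mul]
    apply Finset.sum_le_sum
    intro i _
    rw [Real.norm_eq_abs, sq_abs, hAw i]
    calc (∑ j, (A (EuclideanSpace.single j 1) i) * w j) ^ 2
        ≤ (∑ j, (A (EuclideanSpace.single j 1) i) ^ 2) * ∑ j, (w j) ^ 2 :=
          Finset.sum_mul_sq_le_sq_mul_sq Finset.univ _ _
      _ = _ := by
          congr 1
          simp [Real.norm_eq_abs, sq_abs]
  calc ‖A w‖ = Real.sqrt (‖A w‖ ^ 2) := (Real.sqrt_sq (norm_nonneg _)).symm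
    _ ≤ Real.sqrt ((∑ i, ∑ j, (A (EuclideanSpace.single j 1) i) ^ 2) * ‖w‖ ^ 2) :=
        Real.sqrt_le_sqrt h1
    _ = frobNorm A * ‖w‖ := by
        rw [Real.sqrt_mul (by positivity), Real.sqrt_sq (norm_nonneg _)]
        rfl

set_option maxHeartbeats 1000000 in
lemma taylor_ub {d : ℕ} (f : EuclideanSpace ℝ (Fin d) → ℝ) (ρ : ℝ)
    (hf : ContDiff ℝ 2 f)
    (hLip : ∀ x x' : EuclideanSpace ℝ (Fin d),
      frobNorm (fderiv ℝ (gradient f) x - fderiv ℝ (gradient f) x') ≤ ρ * ‖x - x'‖)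
    (x w : EuclideanSpace ℝ (Fin d)) :
    f (x + w) ≤ f x + ⟪gradient f x, w⟫ + (1/2) * ⟪w, fderiv ℝ (gradient f) x w⟫
      + ρ / 6 * ‖w‖ ^ 3 := by
  set g : EuclideanSpace ℝ (Fin d) → EuclideanSpace ℝ (Fin d) := gradient f with hg
  set H : EuclideanSpace ℝ (Fin d) → (EuclideanSpace ℝ (Fin d) →L[ℝ] EuclideanSpace ℝ (Fin d)) := fun y => fderiv ℝ g y with hH
  have hfd : Differentiable ℝ f := hf.differentiable (by norm_num)
  have hg1 : ContDiff ℝ 1 g := by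
    have h1 : ContDiff ℝ 1 (fderiv ℝ f) := hf.fderiv_right (by norm_num)
    have : g = fun y => (InnerProductSpace.toDual ℝ (EuclideanSpace ℝ (Fin d))).symm (fderiv ℝ f y) := rfl
    rw [this]
    exact (InnerProductSpace.toDual ℝ (EuclideanSpace ℝ (Fin d))).symm.toLinearIsometry.contDiff.comp h1
  have hgd : Differentiable ℝ g := hg1.differentiable (by norm_num)
  have hgradeq : ∀ y v, ⟪g y, v⟫ = fderiv ℝ f y v := fun y v =>
    InnerProductSpace.toDual_symm_apply
  -- curve
  set c : ℝ → EuclideanSpace ℝ (Fin d) := fun t => x + t • w with hc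
  have hcd : ∀ t : ℝ, HasDerivAt c w t := by
    intro t
    simpa [hc] using ((hasDerivAt_id t).smul_const w).const_add x
  have hφ : ∀ t : ℝ, HasDerivAt (fun s => f (c s)) ⟪g (c t), w⟫ t := by
    intro t
    have := (hfd (c t)).hasFDerivAt.comp_hasDerivAt t (hcd t)
    rw [hgradeq]; exact this
  have hψ : ∀ t : ℝ, HasDerivAt (fun s => ⟪g (c s), w⟫) ⟪H (c t) w, w⟫ t := by
    intro t
    have h1 : HasDerivAt (fun s => g (c s)) (H (c t) w) t :=
      (hgd (c t)).hasFDerivAt.comp_hasDerivAt t (hcd t)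
    have h2 := h1.inner ℝ (hasDerivAt_const t w)
    simpa using h2
  -- Lipschitz bound on second derivative along the curve
  have hχ : ∀ t : ℝ, 0 ≤ t → ⟪H (c t) w, w⟫ ≤ ⟪H x w, w⟫ + ρ * ‖w‖ ^ 3 * t := by
    intro t ht
    have h1 : ⟪H (c t) w, w⟫ - ⟪H x w, w⟫ = ⟪(H (c t) - H x) w, w⟫ := by
      simp [ContinuousLinearMap.sub_apply, inner_sub_left]
    have h2 : ⟪(H (c t) - H x) w, w⟫ ≤ ‖(H (c t) - H x) w‖ * ‖w‖ := real_inner_le_norm _ _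
    have h3 : ‖(H (c t) - H x) w‖ ≤ frobNorm (H (c t) - H x) * ‖w‖ := frob_op_bound _ _
    have h4 : frobNorm (H (c t) - H x) ≤ ρ * ‖c t - x‖ := hLip _ _
    have h5 : ‖c t - x‖ = t * ‖w‖ := by
      have : c t - x = t • w := by simp [hc]
      rw [this, norm_smul, Real.norm_eq_abs, abs_of_nonneg ht]
    have h6 : ‖(H (c t) - H x) w‖ * ‖w‖ ≤ (ρ * (t * ‖w‖)) * ‖w‖ * ‖w‖ := by
      have := h3.trans (mul_le_mul_of_nonneg_right (h4.trans_eq (by rw [h5])) (norm_nonneg w))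
      exact mul_le_mul_of_nonneg_right this (norm_nonneg w)
    nlinarith [h6]
  have hc0 : c 0 = x := by simp [hc]
  have hc1 : c 1 = x + w := by simp [hc]
  -- first integration
  have hα : ∀ t : ℝ, HasDerivAt
      (fun s : ℝ => ⟪g x, w⟫ + ⟪H x w, w⟫ * s + ρ * ‖w‖ ^ 3 * s ^ 2 / 2 - ⟪g (c s), w⟫)
      (⟪H x w, w⟫ + ρ * ‖w‖ ^ 3 * t - ⟪H (c t) w, w⟫) t := by
    intro t
    have ha : HasDerivAt (fun s : ℝ => ⟪H x w, w⟫ * s) ⟪H x w, w⟫ t := by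
      simpa using (hasDerivAt_id t).const_mul ⟪H x w, w⟫
    have hb : HasDerivAt (fun s : ℝ => ρ * ‖w‖ ^ 3 * s ^ 2 / 2) (ρ * ‖w‖ ^ 3 * t) t := by
      have h0 := (hasDerivAt_pow 2 t).const_mul (ρ * ‖w‖ ^ 3 / 2)
      have he : (fun s : ℝ => ρ * ‖w‖ ^ 3 * s ^ 2 / 2) = fun s : ℝ => ρ * ‖w‖ ^ 3 / 2 * s ^ 2 := by
        funext s; ring
      rw [he]
      convert h0 using 1
      rfl
      rfl
      norm_num
      ring
    exact (((ha.const_add _).add hb)).sub (hψ t)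
  have key1 : ∀ t ∈ Set.Icc (0:ℝ) 1,
      ⟪g (c t), w⟫ ≤ ⟪g x, w⟫ + ⟪H x w, w⟫ * t + ρ * ‖w‖ ^ 3 * t ^ 2 / 2 := by
    intro t ht
    have hmono := monotoneOn_of_deriv_nonneg (convex_Icc (0:ℝ) 1)
      (f := fun s : ℝ => ⟪g x, w⟫ + ⟪H x w, w⟫ * s + ρ * ‖w‖ ^ 3 * s ^ 2 / 2 - ⟪g (c s), w⟫)
      (fun s _ => (hα s).continuousAt.continuousWithinAt)
      (fun s _ => (hα s).differentiableAt.differentiableWithinAt)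
      (by
        intro s hs
        rw [interior_Icc] at hs
        rw [(hα s).deriv]
        have := hχ s (le_of_lt hs.1)
        linarith)
    have h0 := hmono (Set.left_mem_Icc.mpr (by norm_num)) ht ht.1
    simp only [hc0] at h0
    have h1 : ⟪g x, w⟫ + ⟪H x w, w⟫ * (0:ℝ) + ρ * ‖w‖ ^ 3 * (0:ℝ) ^ 2 / 2 - ⟪g x, w⟫ = 0 := by
      ring
    linarith [h0, h1.ge]
  -- second integration
  have hβ : ∀ t : ℝ, HasDerivAt
      (fun s : ℝ => f x + ⟪g x, w⟫ * s + ⟪H x w, w⟫ * s ^ 2 / 2 + ρ * ‖w‖ ^ 3 * s ^ 3 / 6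
        - f (c s))
      (⟪g x, w⟫ + ⟪H x w, w⟫ * t + ρ * ‖w‖ ^ 3 * t ^ 2 / 2 - ⟪g (c t), w⟫) t := by
    intro t
    have ha : HasDerivAt (fun s : ℝ => ⟪g x, w⟫ * s) ⟪g x, w⟫ t := by
      simpa using (hasDerivAt_id t).const_mul ⟪g x, w⟫
    have hb : HasDerivAt (fun s : ℝ => ⟪H x w, w⟫ * s ^ 2 / 2) (⟪H x w, w⟫ * t) t := by
      have h0 := (hasDerivAt_pow 2 t).const_mul (⟪H x w, w⟫ / 2)
      have he : (fun s : ℝ => ⟪H x w, w⟫ * s ^ 2 / 2) = fun s : ℝ => ⟪H x w, w⟫ / 2 * s ^ 2 := by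
        funext s; ring
      rw [he]
      convert h0 using 1
      rfl
      rfl
      norm_num
      ring
    have hcb : HasDerivAt (fun s : ℝ => ρ * ‖w‖ ^ 3 * s ^ 3 / 6) (ρ * ‖w‖ ^ 3 * t ^ 2 / 2) t := by
      have h0 := (hasDerivAt_pow 3 t).const_mul (ρ * ‖w‖ ^ 3 / 6)
      have he : (fun s : ℝ => ρ * ‖w‖ ^ 3 * s ^ 3 / 6) = fun s : ℝ => ρ * ‖w‖ ^ 3 / 6 * s ^ 3 := by
        funext s; ring
      rw [he]
      convert h0 using 1
      rfl
      rfl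
      norm_num
      ring
    have := (((ha.const_add (f x)).add hb).add hcb).sub (hφ t)
    convert this using 1
    rfl
    rfl
    rfl
  have key2 := monotoneOn_of_deriv_nonneg (convex_Icc (0:ℝ) 1)
    (f := fun s : ℝ => f x + ⟪g x, w⟫ * s + ⟪H x w, w⟫ * s ^ 2 / 2 + ρ * ‖w‖ ^ 3 * s ^ 3 / 6
        - f (c s))
    (fun s _ => (hβ s).continuousAt.continuousWithinAt)
    (fun s _ => (hβ s).differentiableAt.differentiableWithinAt)
    (by
      intro s hs
      rw [interior_Icc] at hs
      rw [(hβ s).deriv]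
      have := key1 s ⟨le_of_lt hs.1, le_of_lt hs.2⟩
      linarith)
  have h0 := key2 (Set.left_mem_Icc.mpr (by norm_num)) (Set.right_mem_Icc.mpr (by norm_num))
    (by norm_num)
  simp only [hc0, hc1] at h0
  have hsym : ⟪w, H x w⟫ = ⟪H x w, w⟫ := real_inner_comm _ _
  rw [hsym]
  have h1 : f x + ⟪g x, w⟫ * (0:ℝ) + ⟪H x w, w⟫ * (0:ℝ) ^ 2 / 2 + ρ * ‖w‖ ^ 3 * (0:ℝ) ^ 3 / 6 - f x = 0 := by ring
  have h2 : f x + ⟪g x, w⟫ * (1:ℝ) + ⟪H x w, w⟫ * (1:ℝ) ^ 2 / 2 + ρ * ‖w‖ ^ 3 * (1:ℝ) ^ 3 / 6 - f (x + w) ≥ 0 := by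
    rw [← h1]
    convert h0 using 2 <;> norm_num
  linarith

lemma rpow_three_halves (x : ℝ) (hx : 0 ≤ x) : x ^ ((3:ℝ)/2) = x * Real.sqrt x := by
  rcases eq_or_lt_of_le hx with h | h
  · rw [← h, Real.zero_rpow (by norm_num), Real.sqrt_zero, mul_zero]
  · have h32 : (3:ℝ)/2 = 1 + 1/2 := by norm_num
    rw [h32, Real.rpow_add h, Real.rpow_one, Real.sqrt_eq_rpow]


set_option maxHeartbeats 1600000 in
/-- For an `M`-strongly convex `f` with `ρ`-Lipschitz Hessian minimized at `x*`, with
Newton target `x̃ = x_B − (∇²f(x_B))⁻¹∇f(x_B)` and quadratic model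
`f̃(x) = ½⟪x − x̃, ∇²f(x_B)(x − x̃)⟫`, one has
`f̃(x_B) ≤ max { 2(f(x_B) − f(x*)), (8ρ/(3 M^{3/2})) (f(x_B) − f(x*))^{3/2} }`. -/
theorem stmt_17 {d : ℕ} (f : EuclideanSpace ℝ (Fin d) → ℝ) (M ρ : ℝ)
    (hM : 0 < M) (hρ : 0 < ρ)
    (hf : ContDiff ℝ 2 f)
    (hsc : ∀ x v : EuclideanSpace ℝ (Fin d),
      M * ‖v‖ ^ 2 ≤ ⟪v, fderiv ℝ (gradient f) x v⟫)
    (hLip : ∀ x x' : EuclideanSpace ℝ (Fin d),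
      frobNorm (fderiv ℝ (gradient f) x - fderiv ℝ (gradient f) x') ≤ ρ * ‖x - x'‖)
    (xstar : EuclideanSpace ℝ (Fin d)) (hmin : ∀ x, f xstar ≤ f x)
    (xB xtilde : EuclideanSpace ℝ (Fin d))
    (hxt : fderiv ℝ (gradient f) xB (xB - xtilde) = gradient f xB) :
    (1 / 2) * ⟪xB - xtilde, fderiv ℝ (gradient f) xB (xB - xtilde)⟫ ≤
      max (2 * (f xB - f xstar))
        ((8 * ρ / (3 * M ^ ((3 : ℝ) / 2))) * (f xB - f xstar) ^ ((3 : ℝ) / 2)) := by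

  set v : EuclideanSpace ℝ (Fin d) := xB - xtilde with hv
  set q : ℝ := ⟪v, fderiv ℝ (gradient f) xB v⟫ with hqdef
  set Δ : ℝ := f xB - f xstar with hΔdef
  have hΔ0 : 0 ≤ Δ := by simp [hΔdef, hmin xB]
  have hq0 : M * ‖v‖ ^ 2 ≤ q := hsc xB v
  have hqnn : 0 ≤ q := le_trans (by positivity) hq0
  have hM32 : M ^ ((3:ℝ)/2) = M * Real.sqrt M := rpow_three_halves M hM.le
  have hMs : 0 < Real.sqrt M := Real.sqrt_pos.mpr hM
  rcases eq_or_lt_of_le hqnn with hq | hqpos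
  · -- q = 0
    refine le_trans ?_ (le_max_left _ _)
    linarith
  -- main case : q > 0
  have hqs : 0 < Real.sqrt q := Real.sqrt_pos.mpr hqpos
  set a : ℝ := ρ * Real.sqrt q / (M * Real.sqrt M) with hadef
  have ha : 0 < a := by positivity
  set s : ℝ := Real.sqrt (1 + 2 * a) with hsdef
  have hs2 : s ^ 2 = 1 + 2 * a := Real.sq_sqrt (by linarith)
  have hsnn : 0 ≤ s := Real.sqrt_nonneg _
  have hs1 : 1 < s := by nlinarith
  set η : ℝ := 2 / (1 + s) with hηdef
  have hηpos : 0 < η := by positivity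
  have hη1 : η < 1 := by
    rw [hηdef, div_lt_one (by linarith)]
    linarith
  have haη : a * η ^ 2 = 2 * (1 - η) := by
    rw [hηdef]
    field_simp
    nlinarith
  -- cubic bound : ρ ‖v‖³ ≤ a q
  have hv3 : ρ * ‖v‖ ^ 3 ≤ a * q := by
    have h1 : Real.sqrt M * ‖v‖ ≤ Real.sqrt q := by
      have := Real.sqrt_le_sqrt hq0
      rwa [Real.sqrt_mul hM.le, Real.sqrt_sq (norm_nonneg v)] at this
    have h2 : (Real.sqrt M * ‖v‖) ^ 3 ≤ (Real.sqrt q) ^ 3 := by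
      apply pow_le_pow_left₀ (by positivity) h1
    have h3 : (Real.sqrt M) ^ 2 = M := Real.sq_sqrt hM.le
    have h4 : (Real.sqrt q) ^ 2 = q := Real.sq_sqrt hqnn
    have h5 : (Real.sqrt M * ‖v‖) ^ 3 = (M * Real.sqrt M) * ‖v‖ ^ 3 := by
      calc (Real.sqrt M * ‖v‖) ^ 3 = (Real.sqrt M) ^ 2 * Real.sqrt M * ‖v‖ ^ 3 := by ring
        _ = (M * Real.sqrt M) * ‖v‖ ^ 3 := by rw [h3]
    have h6 : (Real.sqrt q) ^ 3 = q * Real.sqrt q := by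
      calc (Real.sqrt q) ^ 3 = (Real.sqrt q) ^ 2 * Real.sqrt q := by ring
        _ = q * Real.sqrt q := by rw [h4]
    rw [h5, h6] at h2
    rw [hadef, div_mul_eq_mul_div, le_div_iff₀ (by positivity)]
    nlinarith [mul_le_mul_of_nonneg_left h2 hρ.le]
  -- Taylor bound along the Newton direction
  have htay := taylor_ub f ρ hf hLip xB ((-η) • v)
  have hw1 : ⟪gradient f xB, (-η) • v⟫ = -η * q := by
    rw [real_inner_smul_right, hqdef, ← hxt, real_inner_comm]
  have hw2 : ⟪(-η) • v, fderiv ℝ (gradient f) xB ((-η) • v)⟫ = η ^ 2 * q := by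
    rw [map_smul, real_inner_smul_right, real_inner_smul_left]
    ring
  have hw3 : ‖(-η) • v‖ ^ 3 = η ^ 3 * ‖v‖ ^ 3 := by
    rw [norm_smul, Real.norm_eq_abs, abs_neg, abs_of_pos hηpos]
    ring
  rw [hw1, hw2, hw3] at htay
  have hstar := hmin (xB + (-η) • v)
  -- descent inequality
  have hD : q * (η * (4 - η) / 6) ≤ Δ := by
    have hc1 : ρ / 6 * (η ^ 3 * ‖v‖ ^ 3) ≤ a * η ^ 3 * q / 6 := by
      have := mul_le_mul_of_nonneg_left hv3 (le_of_lt (show (0:ℝ) < η ^ 3 / 6 by positivity))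
      nlinarith
    have hkey : Δ ≥ η * q - η ^ 2 * q / 2 - a * η ^ 3 * q / 6 := by
      rw [hΔdef]
      have := le_trans hstar htay
      nlinarith
    nlinarith [haη, hqpos.le, hηpos.le]
  rcases le_or_gt (1/2 : ℝ) η with hcase | hcase
  · -- large η : linear branch
    refine le_trans ?_ (le_max_left _ _)
    nlinarith [mul_nonneg (sub_nonneg.mpr hcase) (mul_pos hqpos (sub_pos.mpr (show η < 7/2 by linarith))).le]
  · -- small η : 3/2-power branch
    refine le_trans ?_ (le_max_right _ _)
    set t : ℝ := η * (4 - η) / 6 with htdef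
    have htlb : η / 2 ≤ t := by rw [htdef]; nlinarith
    have htpos : 0 < t := lt_of_lt_of_le (by positivity) htlb
    have h32 : (t * q) ^ ((3:ℝ)/2) ≤ Δ ^ ((3:ℝ)/2) := by
      apply Real.rpow_le_rpow (by positivity) (by linarith [hD]) (by norm_num)
    have hexp : (t * q) ^ ((3:ℝ)/2) = t * Real.sqrt t * (q * Real.sqrt q) := by
      rw [rpow_three_halves _ (by positivity), Real.sqrt_mul htpos.le]
      ring
    -- lower bound for t √t
    have hts : η ≤ Real.sqrt (η / 2) := by
      rw [show η / 2 = η * (1/2) by ring]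
      apply Real.le_sqrt' hηpos |>.mpr
      nlinarith
    have htt : η ^ 2 / 2 ≤ t * Real.sqrt t := by
      have h1 : Real.sqrt (η / 2) ≤ Real.sqrt t := Real.sqrt_le_sqrt htlb
      have h2 : η / 2 * Real.sqrt (η / 2) ≤ t * Real.sqrt t := by
        apply mul_le_mul htlb h1 (Real.sqrt_nonneg _) htpos.le
      nlinarith [hts, hηpos, Real.sqrt_nonneg (η/2)]
    -- a lower bound
    have hal : 1 / η ^ 2 ≤ a := by
      rw [div_le_iff₀ (by positivity)]
      nlinarith [haη]
    -- conclude
    have hchain : q / 2 ≤ 8 * ρ / (3 * M ^ ((3:ℝ)/2)) * ((t * q) ^ ((3:ℝ)/2)) := by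
      rw [hexp, hM32]
      have hρq : ρ * (q * Real.sqrt q) = a * q * (M * Real.sqrt M) := by
        rw [hadef]
        field_simp
      rw [div_mul_eq_mul_div, le_div_iff₀ (by positivity)]
      have hfinal : 4 / 3 * q ≤ 8 / 3 * (t * Real.sqrt t) * (a * q) := by
        have h1 : η ^ 2 / 2 * (1 / η ^ 2) ≤ (t * Real.sqrt t) * a := by
          apply mul_le_mul htt hal (by positivity) (by positivity)
        have h2 : η ^ 2 / 2 * (1 / η ^ 2) = 1 / 2 := by field_simp
        rw [h2] at h1
        nlinarith
      have hpos : (0:ℝ) < M * Real.sqrt M := by positivity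
      have h3 := mul_le_mul_of_nonneg_right hfinal hpos.le
      have h4 : 8 * ρ * (t * Real.sqrt t * (q * Real.sqrt q))
          = 8 * (t * Real.sqrt t) * (a * q * (M * Real.sqrt M)) := by
        rw [← hρq]; ring
      linarith [h3, h4, mul_nonneg hqnn hpos.le]
    have hmono := Real.rpow_le_rpow (mul_nonneg htpos.le hqnn) (show t * q ≤ Δ by linarith [hD]) (by norm_num : (0:ℝ) ≤ (3:ℝ)/2)
    calc (1/2) * q = q / 2 := by ring
      _ ≤ 8 * ρ / (3 * M ^ ((3:ℝ)/2)) * ((t * q) ^ ((3:ℝ)/2)) := hchain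
      _ ≤ 8 * ρ / (3 * M ^ ((3:ℝ)/2)) * (Δ ^ ((3:ℝ)/2)) := by
          apply mul_le_mul_of_nonneg_left hmono
          positivity
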